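/- For every natural number n and every real number x, the Laguerre polynomial given by the Rodrigues formula satisfies (e^x / n!) · d^n/dx^n (x^n e^{−x}) = Σ_{k=0}^{n} binom(n,k) · (−1)^k / k! · x^k, where d^n/dx^n denotes the n-th iterated derivative of the function t ↦ t^n e^{−t} evaluated at x. -/

import Mathlib

lemma abel_key (m : ℕ) (g : ℕ → ℝ) :
    ∑ k ∈ Finset.range (m+1), (m.choose k : ℝ) * (-1)^(m-k) * (g (k+1) - g k)
    = ∑ k ∈ Finset.range (m+2), ((m+1).choose k : ℝ) * (-1)^(m+1-k) * g k := by
  rw [Finset.sum_range_succ' (fun k => ((m+1).choose k : ℝ) * (-1)^(m+1-k) * g k)]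
  simp only [mul_sub, Finset.sum_sub_distrib]
  have h1 : ∀ k ∈ Finset.range (m+1),
      ((m+1).choose (k+1) : ℝ) * (-1)^(m+1-(k+1)) * g (k+1)
      = (m.choose k : ℝ) * (-1)^(m-k) * g (k+1)
        + (m.choose (k+1) : ℝ) * (-1)^(m-k) * g (k+1) := by
    intro k hk
    have : m + 1 - (k+1) = m - k := by omega
    rw [Nat.choose_succ_succ, this]
    push_cast
    ring
  rw [Finset.sum_congr rfl h1, Finset.sum_add_distrib]
  have h2 : ∑ k ∈ Finset.range (m+1), (m.choose (k+1) : ℝ) * (-1)^(m-k) * g (k+1)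
      = ∑ k ∈ Finset.range m, (m.choose (k+1) : ℝ) * (-1)^(m-k) * g (k+1) := by
    rw [Finset.sum_range_succ, Nat.choose_succ_self]; simp
  have h3 : (-(∑ k ∈ Finset.range (m+1), (m.choose k : ℝ) * (-1)^(m-k) * g k))
      = ∑ k ∈ Finset.range m, (m.choose (k+1) : ℝ) * (-1)^(m-k) * g (k+1)
        + ((m+1).choose 0 : ℝ) * (-1)^(m+1-0) * g 0 := by
    rw [← Finset.sum_neg_distrib, Finset.sum_range_succ' (fun k => -((m.choose k : ℝ) * (-1)^(m-k) * g k))]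
    congr 1
    · apply Finset.sum_congr rfl
      intro k hk
      simp only [Finset.mem_range] at hk
      have : m - (k+1) + 1 = m - k := by omega
      rw [← this, pow_succ]
      ring
    · simp [pow_succ]
  rw [h2]
  linarith [h3]

lemma iter_formula (n : ℕ) : ∀ (m : ℕ) (x : ℝ),
    iteratedDeriv m (fun t : ℝ => t ^ n * Real.exp (-t)) x
    = ∑ k ∈ Finset.range (m+1),
        (m.choose k : ℝ) * (-1)^(m-k) * ((n.descFactorial k : ℝ) * x^(n-k) * Real.exp (-x)) := by
  intro m
  induction m with
  | zero => intro x; simp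
  | succ m ih =>
    intro x
    rw [iteratedDeriv_succ]
    have hfun : iteratedDeriv m (fun t : ℝ => t ^ n * Real.exp (-t))
        = fun x => ∑ k ∈ Finset.range (m+1),
          (m.choose k : ℝ) * (-1)^(m-k) * ((n.descFactorial k : ℝ) * x^(n-k) * Real.exp (-x)) :=
      funext ih
    rw [hfun]
    have hd : HasDerivAt (fun x : ℝ => ∑ k ∈ Finset.range (m+1),
        (m.choose k : ℝ) * (-1)^(m-k) * ((n.descFactorial k : ℝ) * x^(n-k) * Real.exp (-x)))
        (∑ k ∈ Finset.range (m+1),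
          (m.choose k : ℝ) * (-1)^(m-k) * ((n.descFactorial k : ℝ) *
            (((n-k : ℕ) : ℝ) * x^(n-k-1) * Real.exp (-x) + x^(n-k) * (Real.exp (-x) * (-1))))) x := by
      apply HasDerivAt.fun_sum
      intro k hk
      apply HasDerivAt.const_mul
      have h := ((hasDerivAt_pow (n-k) x).const_mul ((n.descFactorial k : ℝ))).mul
        ((Real.hasDerivAt_exp (-x)).comp x (hasDerivAt_neg x))
      convert h using 1
      · rfl
      simp only [Function.comp, Real.exp_neg]
      ring
    rw [hd.deriv]
    have := abel_key m (fun k => (n.descFactorial k : ℝ) * x^(n-k) * Real.exp (-x))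
    rw [← this]
    apply Finset.sum_congr rfl
    intro k hk
    have hdesc : (n.descFactorial (k+1) : ℝ) = ((n-k : ℕ) : ℝ) * (n.descFactorial k : ℝ) := by
      rw [Nat.descFactorial_succ]; push_cast; ring
    have hsub : n - (k+1) = n - k - 1 := by omega
    rw [hsub, hdesc]
    ring

/-- The Rodrigues formula for the Laguerre polynomial:
`(e^x / n!) (d/dx)^n (x^n e^{-x}) = Σ_{k=0}^n C(n,k) (-1)^k x^k / k!`. -/
theorem laguerre_rodrigues (n : ℕ) (x : ℝ) :
    Real.exp x / (Nat.factorial n) *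
      iteratedDeriv n (fun t : ℝ => t ^ n * Real.exp (-t)) x =
    ∑ k ∈ Finset.range (n + 1),
      (n.choose k : ℝ) * (-1) ^ k / (Nat.factorial k) * x ^ k := by
  rw [iter_formula n n x, Finset.mul_sum, ← Finset.sum_range_reflect]
  apply Finset.sum_congr rfl
  intro j hj
  simp only [Finset.mem_range] at hj
  have hjn : j ≤ n := by omega
  have h0 : n + 1 - 1 - j = n - j := by omega
  have h1 : n - (n - j) = j := by omega
  rw [h0, h1, Nat.choose_symm hjn, Nat.descFactorial_eq_factorial_mul_choose, Nat.choose_symm hjn]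
  have hfac : (n.choose j : ℝ) * (n - j).factorial * j.factorial = n.factorial := by
    have := Nat.choose_mul_factorial_mul_factorial hjn
    push_cast [← this]
    ring
  have hn : (n.factorial : ℝ) ≠ 0 := Nat.cast_ne_zero.mpr n.factorial_ne_zero
  have hjf : (j.factorial : ℝ) ≠ 0 := Nat.cast_ne_zero.mpr j.factorial_ne_zero
  have he : Real.exp x * Real.exp (-x) = 1 := by
    rw [← Real.exp_add]; simp
  field_simp
  push_cast
  linear_combination ((n.choose j : ℝ) * x^j * (n.choose j : ℝ) * ((n-j).factorial : ℝ) * (j.factorial : ℝ)) * he + ((n.choose j : ℝ) * x^j) * hfac
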